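/- In the ring ℚ[a,z,x] (with a = (a_n), z = (z_n) sequences of indeterminates and x an indeterminate), the exponential AZ matrix satisfies the conjugation identity B_x^{-1} · EAZ(a,z) · B_x = EAZ(a, z + x·a), where EAZ(a,z)_{nk} = (n!/k!)·(z_{n-k} + k·a_{n-k+1}) and B_x is the x-binomial matrix (B_x)_{ij} = C(i,j) x^{i-j}. -/

import Mathlib

/-- Row-finite infinite matrices: each row is a finitely supported function. -/
def RFMat (R : Type*) [Zero R] := ℕ → (ℕ →₀ R)

namespace RFMat

variable {R : Type*} [CommRing R]

/-- Matrix product of row-finite matrices: `(P*Q)_{ik} = ∑_j P_{ij} Q_{jk}`. -/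
noncomputable def mul (P Q : RFMat R) : RFMat R :=
  fun i => (P i).sum fun j a => a • Q j

/-- The identity matrix. -/
noncomputable def one : RFMat R := fun i => Finsupp.single i 1

end RFMat

/-- The polynomial ring `ℚ[a, z, x]` in the indeterminates
`a = (a_n)_{n≥0}`, `z = (z_n)_{n≥0}` and `x`. -/
abbrev RAZ : Type := MvPolynomial ((ℕ ⊕ ℕ) ⊕ Unit) ℚ

/-- The indeterminate `a_n`, extended by `a_m = 0` for `m < 0`. -/
noncomputable def aInd (m : ℤ) : RAZ :=
  if 0 ≤ m then MvPolynomial.X (Sum.inl (Sum.inl m.toNat)) else 0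

/-- The indeterminate `z_n`, extended by `z_m = 0` for `m < 0`. -/
noncomputable def zInd (m : ℤ) : RAZ :=
  if 0 ≤ m then MvPolynomial.X (Sum.inl (Sum.inr m.toNat)) else 0

/-- The indeterminate `x`. -/
noncomputable def xInd : RAZ := MvPolynomial.X (Sum.inr ())

/-- The exponential AZ matrix `EAZ(a,z)_{nk} = (n!/k!)·(z_{n-k} + k·a_{n-k+1})`,
with `z_{-1} := 0` and `a_m = z_m = 0` for `m < 0` (so the rows are
finitely supported: the entry vanishes for `k > n+1`). -/
noncomputable def EAZ (a z : ℤ → RAZ) : RFMat RAZ :=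
  fun n => ∑ k ∈ Finset.range (n + 2),
    Finsupp.single k
      (((n.factorial : ℚ) / (k.factorial : ℚ)) •
        (z ((n : ℤ) - k) + (k : RAZ) * a ((n : ℤ) - k + 1)))

/-- The `x`-binomial matrix `(B_x)_{ij} = C(i,j)·x^{i-j}` (with `x ↦ t`). -/
noncomputable def BxMat (t : RAZ) : RFMat RAZ :=
  fun n => ∑ j ∈ Finset.range (n + 1),
    Finsupp.single j ((n.choose j : RAZ) * t ^ (n - j))


namespace RFMat
variable {R : Type*} [CommRing R]

lemma mul_row (P Q : RFMat R) (n N : ℕ) (c : ℕ → R)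
    (h : P n = ∑ j ∈ Finset.range N, Finsupp.single j (c j)) :
    mul P Q n = ∑ j ∈ Finset.range N, c j • Q j := by
  show (P n).sum (fun j a => a • Q j) = _
  rw [h, ← Finsupp.sum_finsetSum_index (g := fun j => Finsupp.single j (c j))
    (h := fun j a => a • Q j)
    (fun _ => zero_smul R _) (fun _ x y => add_smul x y _)]
  exact Finset.sum_congr rfl fun j _ =>
    Finsupp.sum_single_index (zero_smul R _)

lemma mul_apply (P Q : RFMat R) (n N : ℕ) (c : ℕ → R)
    (h : P n = ∑ j ∈ Finset.range N, Finsupp.single j (c j)) (k : ℕ) :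
    mul P Q n k = ∑ j ∈ Finset.range N, c j * Q j k := by
  rw [mul_row P Q n N c h, Finsupp.finset_sum_apply]
  simp [Finsupp.smul_apply, smul_eq_mul]

lemma one_mul (P : RFMat R) : mul one P = P := by
  funext n
  show (Finsupp.single n (1:R)).sum (fun j a => a • P j) = P n
  rw [Finsupp.sum_single_index (h := fun j a => a • P j) (zero_smul R _), one_smul]

lemma mul_assoc (P Q S : RFMat R) : mul (mul P Q) S = mul P (mul Q S) := by
  funext n
  show ((P n).sum fun j a => a • Q j).sum (fun k b => b • S k)
      = (P n).sum fun j a => a • ((Q j).sum fun k b => b • S k)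
  rw [Finsupp.sum_sum_index (h := fun k b => b • S k)
    (fun _ => zero_smul R _) (fun _ x y => add_smul x y _)]
  refine Finsupp.sum_congr fun j _ => ?_
  rw [Finsupp.sum_smul_index' (h := fun k b => b • S k) (fun _ => zero_smul R _), Finsupp.smul_sum]
  exact Finset.sum_congr rfl fun k _ => by
    simp only [smul_eq_mul, mul_smul]


end RFMat

lemma Bx_apply (t : RAZ) (n k : ℕ) :
    BxMat t n k = if k ≤ n then (n.choose k : RAZ) * t ^ (n - k) else 0 := by
  show (∑ j ∈ Finset.range (n + 1),
    Finsupp.single j ((n.choose j : RAZ) * t ^ (n - j))) k = _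
  rw [Finsupp.finset_sum_apply]
  simp [Finsupp.single_apply, Nat.lt_succ_iff]

lemma BxMat_mul (s t : RAZ) :
    RFMat.mul (BxMat s) (BxMat t) = BxMat (s + t) := by
  funext n
  refine Finsupp.ext fun k => ?_
  rw [RFMat.mul_apply (BxMat s) (BxMat t) n (n+1)
    (fun j => (n.choose j : RAZ) * s ^ (n - j)) rfl k]
  have hR : (BxMat (s+t) n) k = if k ≤ n then (n.choose k : RAZ) * (s+t) ^ (n - k) else 0 :=
    Bx_apply _ n k
  rw [hR]
  simp only [Bx_apply]
  by_cases hk : k ≤ n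
  · rw [if_pos hk]
    have hsub : Finset.Icc k n ⊆ Finset.range (n+1) := by
      intro j hj; simp only [Finset.mem_Icc] at hj; simp [Nat.lt_succ_iff, hj.2]
    rw [← Finset.sum_subset hsub (by
      intro j hj hj2
      simp only [Finset.mem_range, Finset.mem_Icc, not_and_or, not_le] at hj hj2
      have : ¬ k ≤ j := by omega
      rw [if_neg this, mul_zero])]
    have hIcc : Finset.Icc k n = Finset.Ico k (n+1) := by
      rw [Finset.Ico_add_one_right_eq_Icc]
    rw [hIcc, Finset.sum_Ico_eq_sum_range]
    have hN : n + 1 - k = (n - k) + 1 := by omega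
    rw [hN, add_pow, Finset.mul_sum]
    conv_rhs => rw [← Finset.sum_range_reflect]
    refine Finset.sum_congr rfl fun m hm => ?_
    simp only [Finset.mem_range, Nat.lt_succ_iff] at hm
    have h1 : k ≤ k + m := Nat.le_add_right k m
    rw [if_pos h1]
    have e1 : k + m - k = m := by omega
    have e2 : n - (k + m) = n - k - m := by omega
    have e3 : n - k + 1 - 1 - m = n - k - m := by omega
    have e4 : n - k - (n - k - m) = m := by omega
    rw [e1, e2, e3, e4]
    have hcoef : (n.choose (k+m)) * ((k+m).choose k) = n.choose k * (n-k).choose (n - k - m) := by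
      rw [Nat.choose_mul h1, show k + m - k = m from by omega,
        Nat.choose_symm (show m ≤ n - k from hm)]
    have hc2 : ((n.choose (k+m) : RAZ)) * ((k+m).choose k)
        = (n.choose k : RAZ) * ((n-k).choose (n-k-m)) := by exact_mod_cast hcoef
    linear_combination (s^(n-k-m)*t^m) * hc2
  · rw [if_neg hk]
    refine Finset.sum_eq_zero fun j hj => ?_
    simp only [Finset.mem_range, Nat.lt_succ_iff] at hj
    rw [if_neg (by omega), mul_zero]

lemma BxMat_zero : BxMat 0 = RFMat.one := by
  funext n
  show (∑ j ∈ Finset.range (n + 1),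
    Finsupp.single j ((n.choose j : RAZ) * (0:RAZ) ^ (n - j))) = Finsupp.single n 1
  rw [Finset.sum_eq_single_of_mem n (by simp)]
  · simp
  · intro j hj hjn
    simp only [Finset.mem_range, Nat.lt_succ_iff] at hj
    rw [zero_pow (by omega), mul_zero, Finsupp.single_zero]

lemma zInd_of_neg {m : ℤ} (h : m < 0) : zInd m = 0 := by
  simp [zInd, not_le.2 h]

lemma aInd_of_neg {m : ℤ} (h : m < 0) : aInd m = 0 := by
  simp [aInd, not_le.2 h]

lemma EAZ_apply (a z : ℤ → RAZ) (n k : ℕ) :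
    EAZ a z n k = if k ≤ n + 1 then
      ((n.factorial : ℚ) / (k.factorial : ℚ)) •
        (z ((n : ℤ) - k) + (k : RAZ) * a ((n : ℤ) - k + 1)) else 0 := by
  show (∑ j ∈ Finset.range (n + 2), Finsupp.single j
      (((n.factorial : ℚ) / (j.factorial : ℚ)) •
        (z ((n : ℤ) - j) + (j : RAZ) * a ((n : ℤ) - j + 1)))) k = _
  rw [Finsupp.finset_sum_apply]
  simp only [Finsupp.single_apply]
  rw [Finset.sum_ite_eq' (Finset.range (n+2)) k]
  simp [Nat.lt_succ_iff, Nat.lt_add_one_iff, show n + 2 = (n+1)+1 from rfl]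

/-- the normalized coefficient `n!/(k!·d!)`. -/
noncomputable def qc (n k d : ℕ) : ℚ :=
  (n.factorial : ℚ) / ((k.factorial : ℚ) * (d.factorial : ℚ))

section Key
open MvPolynomial Finset

variable (n k : ℕ)

noncomputable def Tz (i : ℕ) : RAZ :=
  if k ≤ i then C (qc n k (i-k)) * xInd ^ (i-k) * zInd ((n:ℤ) - i) else 0
noncomputable def Ta1 (i : ℕ) : RAZ :=
  if k+1 ≤ i then C (qc n k (i-k-1)) * xInd ^ (i-k) * aInd ((n:ℤ) - i + 1) else 0
noncomputable def Ta2 (i : ℕ) : RAZ :=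
  if k ≤ i then (k:RAZ) * C (qc n k (i-k)) * xInd ^ (i-k) * aInd ((n:ℤ) - i + 1) else 0
noncomputable def Rz (j : ℕ) : RAZ :=
  if k ≤ j then C (qc n k (n-j)) * xInd ^ (n-j) * zInd ((j:ℤ) - k) else 0
noncomputable def Ra1 (j : ℕ) : RAZ :=
  if k ≤ j then C (qc n k (n-j)) * xInd ^ (n-j) * xInd * aInd ((j:ℤ) - k) else 0
noncomputable def Ra2 (j : ℕ) : RAZ :=
  if k ≤ j+1 then (k:RAZ) * C (qc n k (n-j)) * xInd ^ (n-j) * aInd ((j:ℤ) - k + 1) else 0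

lemma fact_ne (m : ℕ) : ((m.factorial : ℚ)) ≠ 0 :=
  Nat.cast_ne_zero.mpr (Nat.factorial_ne_zero m)

/-- Step L : decomposition of the LHS summand. -/
lemma stepL (i : ℕ) :
    (((n.factorial : ℚ) / (i.factorial : ℚ)) •
        (zInd ((n : ℤ) - i) + (i : RAZ) * aInd ((n : ℤ) - i + 1))) *
      (if k ≤ i then (i.choose k : RAZ) * xInd ^ (i - k) else 0)
    = Tz n k i + Ta1 n k i + Ta2 n k i := by
  rcases lt_or_ge i k with hik | hik
  · rw [Tz, Ta1, Ta2, if_neg (by omega), if_neg (by omega), if_neg (by omega),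
      if_neg (by omega)]
    simp
  rcases Nat.eq_or_lt_of_le hik with rfl | hlt
  · have e1 : ∀ (p q : RAZ), (if k ≤ k then p else q) = p := fun p q => if_pos le_rfl
    simp only [Tz, Ta1, Ta2, e1, if_neg (show ¬ (k+1 ≤ k) from by omega)]
    have hq0 : qc n k (k-k) = (n.factorial : ℚ) / (k.factorial : ℚ) := by
      simp [qc, Nat.sub_self]
    rw [hq0, Nat.sub_self, pow_zero, Nat.choose_self, Nat.cast_one,
      MvPolynomial.smul_eq_C_mul]
    have hcast3 : ((k : ℕ) : RAZ) = MvPolynomial.C ((k : ℕ) : ℚ) := by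
      rw [map_natCast (MvPolynomial.C : ℚ →+* RAZ)]
    rw [hcast3]
    ring
  · obtain ⟨d, rfl⟩ : ∃ d, i = k + d + 1 := ⟨i - k - 1, by omega⟩
    have e1 : ∀ (p q : RAZ), (if k ≤ k+d+1 then p else q) = p := fun p q => if_pos (by omega)
    have e2 : ∀ (p q : RAZ), (if k+1 ≤ k+d+1 then p else q) = p := fun p q => if_pos (by omega)
    simp only [Tz, Ta1, Ta2, e1, e2]
    rw [show k + d + 1 - k = d + 1 from by omega, show d + 1 - 1 = d from by omega]
    rw [MvPolynomial.smul_eq_C_mul]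
    have hcast : (((k+d+1).choose k : ℕ) : RAZ) = C (((k+d+1).choose k : ℚ)) := by
      rw [map_natCast (MvPolynomial.C : ℚ →+* RAZ)]
    have hcast2 : (((k+d+1) : ℕ) : RAZ) = C (((k+d+1) : ℕ) : ℚ) := by
      rw [map_natCast (MvPolynomial.C : ℚ →+* RAZ)]
    have hcast3 : ((k : ℕ) : RAZ) = C ((k : ℕ) : ℚ) := by
      rw [map_natCast (MvPolynomial.C : ℚ →+* RAZ)]
    rw [hcast, hcast2, hcast3]
    have hch : (((k+d+1).choose k : ℕ) : ℚ)
        = ((k+d+1).factorial : ℚ) / ((k.factorial : ℚ) * ((d+1).factorial : ℚ)) := by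
      rw [Nat.cast_choose ℚ (show k ≤ k + d + 1 from by omega),
        show k + d + 1 - k = d + 1 from by omega]
    have h1q : ((n.factorial : ℚ) / ((k+d+1).factorial : ℚ)) * (((k+d+1).choose k : ℕ) : ℚ)
        = qc n k (d+1) := by
      rw [hch, qc]
      field_simp
    have h2q : ((n.factorial : ℚ) / ((k+d+1).factorial : ℚ)) * (((k+d+1) : ℕ) : ℚ)
          * (((k+d+1).choose k : ℕ) : ℚ)
        = qc n k d + ((k:ℕ) : ℚ) * qc n k (d+1) := by
      rw [hch, qc, qc]
      have hfs : ((d+1).factorial : ℚ) = ((d:ℚ)+1) * (d.factorial : ℚ) := by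
        rw [Nat.factorial_succ]; push_cast; ring
      rw [hfs]
      field_simp
      push_cast
      ring
    have hA : (C ((n.factorial : ℚ) / ((k+d+1).factorial : ℚ)) : RAZ)
        * C (((k+d+1).choose k : ℕ) : ℚ) = C (qc n k (d+1)) := by
      rw [← map_mul, h1q]
    have hB : (C ((n.factorial : ℚ) / ((k+d+1).factorial : ℚ)) : RAZ)
        * C (((k+d+1) : ℕ) : ℚ) * C (((k+d+1).choose k : ℕ) : ℚ)
        = C (qc n k d) + C ((k:ℕ) : ℚ) * C (qc n k (d+1)) := by
      rw [← map_mul, ← map_mul, h2q, map_add, map_mul]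
    linear_combination (zInd ((n:ℤ) - ((k+d+1 : ℕ) : ℤ)) * xInd ^ (d+1)) * hA
      + (aInd ((n:ℤ) - ((k+d+1 : ℕ) : ℤ) + 1) * xInd ^ (d+1)) * hB

/-- Step R : decomposition of the RHS summand. -/
lemma stepR (j : ℕ) (hj : j ≤ n) :
    ((n.choose j : RAZ) * xInd ^ (n - j)) *
      (if k ≤ j + 1 then ((j.factorial : ℚ) / (k.factorial : ℚ)) •
        ((zInd ((j:ℤ) - k) + xInd * aInd ((j:ℤ) - k)) + (k : RAZ) * aInd ((j:ℤ) - k + 1))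
        else 0)
    = Rz n k j + Ra1 n k j + Ra2 n k j := by
  have hcastn : ((n.choose j : ℕ) : RAZ) = C ((n.choose j : ℕ) : ℚ) := by
    rw [map_natCast (MvPolynomial.C : ℚ →+* RAZ)]
  have hcast3 : ((k : ℕ) : RAZ) = C ((k : ℕ) : ℚ) := by
    rw [map_natCast (MvPolynomial.C : ℚ →+* RAZ)]
  have hC : (C ((n.choose j : ℕ) : ℚ) : RAZ) * C ((j.factorial : ℚ) / (k.factorial : ℚ))
      = C (qc n k (n-j)) := by
    rw [← map_mul]
    congr 1
    rw [Nat.cast_choose ℚ hj, qc]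
    have h1 : ((j.factorial : ℚ)) ≠ 0 := fact_ne j
    have h2 : ((k.factorial : ℚ)) ≠ 0 := fact_ne k
    have h3 : (((n-j).factorial : ℚ)) ≠ 0 := fact_ne (n-j)
    field_simp
  rcases lt_or_ge (j+1) k with hjk | hjk
  · simp only [Rz, Ra1, Ra2, if_neg (show ¬ k ≤ j from by omega),
      if_neg (show ¬ k ≤ j + 1 from by omega)]
    simp
  rcases lt_or_ge j k with hlt | hge
  · -- k = j + 1
    have hk1 : k = j + 1 := by omega
    have hz : zInd ((j:ℤ) - k) = 0 := zInd_of_neg (by omega)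
    have ha : aInd ((j:ℤ) - k) = 0 := aInd_of_neg (by omega)
    simp only [Rz, Ra1, Ra2, if_neg (show ¬ k ≤ j from by omega),
      if_pos (show k ≤ j + 1 from by omega), hz, ha,
      MvPolynomial.smul_eq_C_mul, hcastn, hcast3]
    linear_combination (C ((k : ℕ) : ℚ) * xInd ^ (n-j) * aInd ((j:ℤ) - k + 1)) * hC
  · -- k ≤ j
    simp only [Rz, Ra1, Ra2, if_pos (show k ≤ j from hge),
      if_pos (show k ≤ j + 1 from by omega),
      MvPolynomial.smul_eq_C_mul, hcastn, hcast3]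
    linear_combination (xInd ^ (n-j) * zInd ((j:ℤ) - k)
      + xInd ^ (n-j) * xInd * aInd ((j:ℤ) - k)
      + C ((k : ℕ) : ℚ) * xInd ^ (n-j) * aInd ((j:ℤ) - k + 1)) * hC

lemma sumTz : ∑ i ∈ range (n+2), Tz n k i = ∑ j ∈ range (n+1), Rz n k j := by
  rw [← Finset.sum_subset (show Finset.Icc k n ⊆ range (n+2) from by
        intro i hi; simp only [Finset.mem_Icc] at hi; simp only [Finset.mem_range]; omega)
      (by
        intro i hi1 hi2
        simp only [Finset.mem_range] at hi1
        simp only [Finset.mem_Icc, not_and_or, not_le] at hi2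
        rcases lt_or_ge i k with h | h
        · rw [Tz, if_neg (by omega)]
        · have : i = n + 1 := by omega
          subst this
          rw [Tz, if_pos (by omega), zInd_of_neg (by omega), mul_zero]),
    ← Finset.sum_subset (show Finset.Icc k n ⊆ range (n+1) from by
        intro i hi; simp only [Finset.mem_Icc] at hi; simp only [Finset.mem_range]; omega)
      (by
        intro j hj1 hj2
        simp only [Finset.mem_range] at hj1
        simp only [Finset.mem_Icc, not_and_or, not_le] at hj2
        rw [Rz, if_neg (by omega)])]
  refine Finset.sum_nbij' (fun i => n + k - i) (fun j => n + k - j) ?_ ?_ ?_ ?_ ?_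
  · intro i hi; simp only [Finset.mem_Icc] at hi ⊢; try dsimp only
    omega
  · intro j hj; simp only [Finset.mem_Icc] at hj ⊢; try dsimp only
    omega
  · intro i hi; simp only [Finset.mem_Icc] at hi; try dsimp only
    omega
  · intro j hj; simp only [Finset.mem_Icc] at hj; try dsimp only
    omega
  · intro i hi
    simp only [Finset.mem_Icc] at hi
    obtain ⟨d, rfl⟩ : ∃ d, i = k + d := ⟨i - k, by omega⟩
    rw [Tz, Rz, if_pos (by omega), if_pos (by omega),
      show k + d - k = d from by omega,
      show n - (n + k - (k + d)) = d from by omega,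
      show ((n + k - (k + d) : ℕ) : ℤ) - (k : ℕ) = (n : ℤ) - ((k + d : ℕ) : ℤ) from by omega]

lemma sumTa1 : ∑ i ∈ range (n+2), Ta1 n k i = ∑ j ∈ range (n+1), Ra1 n k j := by
  rw [← Finset.sum_subset (show Finset.Icc (k+1) (n+1) ⊆ range (n+2) from by
        intro i hi; simp only [Finset.mem_Icc] at hi; simp only [Finset.mem_range]; omega)
      (by
        intro i hi1 hi2
        simp only [Finset.mem_range] at hi1
        simp only [Finset.mem_Icc, not_and_or, not_le] at hi2
        rw [Ta1, if_neg (by omega)]),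
    ← Finset.sum_subset (show Finset.Icc k n ⊆ range (n+1) from by
        intro i hi; simp only [Finset.mem_Icc] at hi; simp only [Finset.mem_range]; omega)
      (by
        intro j hj1 hj2
        simp only [Finset.mem_range] at hj1
        simp only [Finset.mem_Icc, not_and_or, not_le] at hj2
        rw [Ra1, if_neg (by omega)])]
  refine Finset.sum_nbij' (fun i => n + k + 1 - i) (fun j => n + k + 1 - j) ?_ ?_ ?_ ?_ ?_
  · intro i hi; simp only [Finset.mem_Icc] at hi ⊢; try dsimp only
    omega
  · intro j hj; simp only [Finset.mem_Icc] at hj ⊢; try dsimp only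
    omega
  · intro i hi; simp only [Finset.mem_Icc] at hi; try dsimp only
    omega
  · intro j hj; simp only [Finset.mem_Icc] at hj; try dsimp only
    omega
  · intro i hi
    simp only [Finset.mem_Icc] at hi
    obtain ⟨d, rfl⟩ : ∃ d, i = k + 1 + d := ⟨i - k - 1, by omega⟩
    rw [Ta1, Ra1, if_pos (by omega), if_pos (by omega),
      show k + 1 + d - k - 1 = d from by omega,
      show k + 1 + d - k = d + 1 from by omega,
      show n - (n + k + 1 - (k + 1 + d)) = d from by omega,
      show ((n + k + 1 - (k + 1 + d) : ℕ) : ℤ) - (k : ℕ)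
        = (n : ℤ) - ((k + 1 + d : ℕ) : ℤ) + 1 from by omega,
      pow_succ]
    ring

lemma sumTa2 : ∑ i ∈ range (n+2), Ta2 n k i = ∑ j ∈ range (n+1), Ra2 n k j := by
  rcases Nat.eq_zero_or_pos k with rfl | hk
  · rw [Finset.sum_eq_zero, Finset.sum_eq_zero]
    · intro j _; rw [Ra2]; simp
    · intro i _; rw [Ta2]; simp
  rw [← Finset.sum_subset (show Finset.Icc k (n+1) ⊆ range (n+2) from by
        intro i hi; simp only [Finset.mem_Icc] at hi; simp only [Finset.mem_range]; omega)
      (by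
        intro i hi1 hi2
        simp only [Finset.mem_range] at hi1
        simp only [Finset.mem_Icc, not_and_or, not_le] at hi2
        rw [Ta2, if_neg (by omega)]),
    ← Finset.sum_subset (show Finset.Icc (k-1) n ⊆ range (n+1) from by
        intro i hi; simp only [Finset.mem_Icc] at hi; simp only [Finset.mem_range]; omega)
      (by
        intro j hj1 hj2
        simp only [Finset.mem_range] at hj1
        simp only [Finset.mem_Icc, not_and_or, not_le] at hj2
        rw [Ra2, if_neg (by omega)])]
  refine Finset.sum_nbij' (fun i => n + k - i) (fun j => n + k - j) ?_ ?_ ?_ ?_ ?_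
  · intro i hi; simp only [Finset.mem_Icc] at hi ⊢; try dsimp only
    omega
  · intro j hj; simp only [Finset.mem_Icc] at hj ⊢; try dsimp only
    omega
  · intro i hi; simp only [Finset.mem_Icc] at hi; try dsimp only
    omega
  · intro j hj; simp only [Finset.mem_Icc] at hj; try dsimp only
    omega
  · intro i hi
    simp only [Finset.mem_Icc] at hi
    obtain ⟨d, rfl⟩ : ∃ d, i = k + d := ⟨i - k, by omega⟩
    rw [Ta2, Ra2, if_pos (by omega), if_pos (by omega),
      show k + d - k = d from by omega,
      show n - (n + k - (k + d)) = d from by omega,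
      show ((n + k - (k + d) : ℕ) : ℤ) - (k : ℕ) + 1
        = (n : ℤ) - ((k + d : ℕ) : ℤ) + 1 from by omega]

lemma keyB :
    ∑ i ∈ range (n+2),
      ((((n.factorial : ℚ) / (i.factorial : ℚ)) •
        (zInd ((n : ℤ) - i) + (i : RAZ) * aInd ((n : ℤ) - i + 1))) * (BxMat xInd i k))
    = ∑ j ∈ range (n+1),
      (((n.choose j : RAZ) * xInd ^ (n - j)) *
        (EAZ aInd (fun m => zInd m + xInd * aInd m) j k)) := by
  have hL : ∀ i ∈ range (n+2),
      ((((n.factorial : ℚ) / (i.factorial : ℚ)) •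
        (zInd ((n : ℤ) - i) + (i : RAZ) * aInd ((n : ℤ) - i + 1))) * (BxMat xInd i k))
      = Tz n k i + Ta1 n k i + Ta2 n k i := by
    intro i _
    rw [Bx_apply]
    exact stepL n k i
  have hR : ∀ j ∈ range (n+1),
      (((n.choose j : RAZ) * xInd ^ (n - j)) *
        (EAZ aInd (fun m => zInd m + xInd * aInd m) j k))
      = Rz n k j + Ra1 n k j + Ra2 n k j := by
    intro j hj
    simp only [Finset.mem_range] at hj
    rw [EAZ_apply]
    exact stepR n k j (by omega)
  rw [Finset.sum_congr rfl hL, Finset.sum_congr rfl hR,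
    Finset.sum_add_distrib, Finset.sum_add_distrib,
    Finset.sum_add_distrib, Finset.sum_add_distrib,
    sumTz, sumTa1, sumTa2]

end Key

/-- In `ℚ[a,z,x]`, the `x`-binomial matrix `B_x` is invertible
with inverse `B_{-x}`, and the exponential AZ matrix satisfies the conjugation
identity `B_x⁻¹ · EAZ(a,z) · B_x = EAZ(a, z + x·a)`. -/
theorem EAZ_conjugation :
    RFMat.mul (BxMat xInd) (BxMat (-xInd)) = RFMat.one ∧
    RFMat.mul (BxMat (-xInd)) (BxMat xInd) = RFMat.one ∧
    RFMat.mul (BxMat (-xInd)) (RFMat.mul (EAZ aInd zInd) (BxMat xInd))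
      = EAZ aInd (fun m => zInd m + xInd * aInd m) := by
  have h0 : BxMat (xInd + -xInd) = RFMat.one := by
    rw [show xInd + -xInd = (0 : RAZ) from by ring, BxMat_zero]
  have h0' : BxMat (-xInd + xInd) = RFMat.one := by
    rw [show -xInd + xInd = (0 : RAZ) from by ring, BxMat_zero]
  refine ⟨by rw [BxMat_mul, h0], by rw [BxMat_mul, h0'], ?_⟩
  have h4 : RFMat.mul (EAZ aInd zInd) (BxMat xInd)
      = RFMat.mul (BxMat xInd) (EAZ aInd (fun m => zInd m + xInd * aInd m)) := by
    funext n
    refine Finsupp.ext fun k => ?_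
    rw [RFMat.mul_apply (EAZ aInd zInd) (BxMat xInd) n (n+2)
        (fun i => ((n.factorial : ℚ) / (i.factorial : ℚ)) •
          (zInd ((n : ℤ) - i) + (i : RAZ) * aInd ((n : ℤ) - i + 1))) rfl k,
      RFMat.mul_apply (BxMat xInd) (EAZ aInd (fun m => zInd m + xInd * aInd m)) n (n+1)
        (fun j => (n.choose j : RAZ) * xInd ^ (n - j)) rfl k]
    exact keyB n k
  rw [h4, ← RFMat.mul_assoc, BxMat_mul, h0', RFMat.one_mul]
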